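/- Let (Y_j) be i.i.d. positive integer-valued random variables, S_m = Y_1 + ... + Y_m, M_n the number of m with S_m ≤ n, and suppose P(Y_1 ≥ n) ≥ n^{-(1-α)+o(1)} for some α ∈ (0,1). Then for each ν > 1-α, the probability that there exists i ≥ n with M_i ≥ i^ν decays faster than every power of n as n → ∞. -/

import Mathlib

open MeasureTheory ProbabilityTheory

set_option maxHeartbeats 1000000

/-- **Superpolynomial decay for renewal counts.** For i.i.d. positive-integer random
variables `Y_j`, partial sums `S_m`, and `M_n = sup{m : S_m ≤ n}` the number of
renewal times in `[1,n]`, if `P(Y_1 ≥ n) ≥ n^{-(1-α)+o(1)}` for some `α ∈ (0,1)`,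
then for each `ν > 1-α`, the probability that there exists `i ≥ n` with
`M_i ≥ i^ν` decays faster than every power of `n`. -/
theorem renewal_count_superpolynomial_decay
    {Ω : Type*} [MeasureSpace Ω] [IsProbabilityMeasure (ℙ : Measure Ω)]
    (Y : ℕ → Ω → ℕ)
    (hmeas : ∀ j, Measurable (Y j))
    (hpos : ∀ j ω, 0 < Y j ω)
    (hindep : iIndepFun Y ℙ)
    (hident : ∀ j, IdentDistrib (Y j) (Y 0) ℙ ℙ)
    (S : ℕ → Ω → ℕ) (hS : ∀ m ω, S m ω = ∑ j ∈ Finset.range m, Y j ω)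
    (M : ℕ → Ω → ℕ) (hM : ∀ n ω, M n ω = sSup {m | S m ω ≤ n})
    (α : ℝ) (hα : 0 < α ∧ α < 1)
    (htail : ∀ ε : ℝ, 0 < ε → ∃ N : ℕ, ∀ n : ℕ, N ≤ n →
      (n : ℝ) ^ (-(1 - α) - ε) ≤ (ℙ {ω | n ≤ Y 0 ω}).toReal) :
    ∀ ν : ℝ, 1 - α < ν → ∀ s : ℝ, 0 < s → ∃ C : ℝ, ∀ n : ℕ, 1 ≤ n →
      (ℙ {ω | ∃ i : ℕ, n ≤ i ∧ (i : ℝ) ^ ν ≤ (M i ω : ℝ)}).toReal ≤ C * (n : ℝ) ^ (-s) := by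
  obtain ⟨hα0, hα1⟩ := hα
  intro ν hν s hs
  set ε : ℝ := (ν - (1 - α)) / 2 with hε_def
  have hε : 0 < ε := by simp only [hε_def]; linarith
  obtain ⟨N, hN⟩ := htail ε hε
  set β : ℝ := (1 - α) + ε with hβ_def
  have hβpos : 0 < β := by simp only [hβ_def]; linarith
  have hνβ : ν - β = ε := by simp only [hβ_def, hε_def]; ring
  set c : ℝ := (2 : ℝ) ^ (-β) with hc_def
  have hc : 0 < c := Real.rpow_pos_of_pos two_pos _
  set k : ℕ → ℕ := fun i => ⌈(i : ℝ) ^ ν⌉₊ with hk_def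
  set A : ℕ → Set Ω := fun i => {ω | S (k i) ω ≤ i} with hA_def
  -- monotonicity facts about S
  have hSle : ∀ ω m m', m ≤ m' → S m ω ≤ S m' ω := by
    intro ω m m' h
    rw [hS, hS]
    exact Finset.sum_le_sum_of_subset (Finset.range_subset_range.mpr h)
  have hmS : ∀ ω m, m ≤ S m ω := by
    intro ω m
    rw [hS]
    calc m = ∑ _j ∈ Finset.range m, 1 := by simp
    _ ≤ ∑ j ∈ Finset.range m, Y j ω := Finset.sum_le_sum fun j _ => hpos j ω
  -- inclusion of the target event in a union
  have hsub : ∀ n : ℕ, {ω | ∃ i : ℕ, n ≤ i ∧ (i : ℝ) ^ ν ≤ (M i ω : ℝ)} ⊆ ⋃ j : ℕ, A (j + n) := by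
    intro n ω hω
    obtain ⟨i, hni, hMi⟩ := hω
    have hne : {m | S m ω ≤ i}.Nonempty := ⟨0, by simp [hS]⟩
    have hbdd : BddAbove {m | S m ω ≤ i} := ⟨i, fun m hm => le_trans (hmS ω m) hm⟩
    have hmem : S (M i ω) ω ≤ i := by
      rw [hM]; exact Nat.sSup_mem hne hbdd
    have hkM : k i ≤ M i ω := Nat.ceil_le.mpr hMi
    have : ω ∈ A i := le_trans (hSle ω _ _ hkM) hmem
    exact Set.mem_iUnion.mpr ⟨i - n, by rwa [Nat.sub_add_cancel hni]⟩
  -- measure of A i in terms of the single-variable cdf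
  have hAmeas : ∀ i : ℕ, ℙ (A i) ≤ (ℙ {ω | Y 0 ω ≤ i}) ^ (k i) := by
    intro i
    have hsub2 : A i ⊆ ⋂ j ∈ Finset.range (k i), {ω | Y j ω ≤ i} := by
      intro ω hω
      simp only [Set.mem_iInter]
      intro j hj
      have : Y j ω ≤ S (k i) ω := by
        rw [hS]
        exact Finset.single_le_sum (f := fun j => Y j ω) (fun _ _ => Nat.zero_le _) hj
      exact le_trans this hω
    refine le_trans (measure_mono hsub2) (le_of_eq ?_)
    have h := hindep.meas_biInter (S := Finset.range (k i)) (s := fun j => {ω | Y j ω ≤ i})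
      (fun j _ => ⟨Set.Iic i, measurableSet_Iic, rfl⟩)
    rw [h]
    have heq : ∀ j, ℙ {ω | Y j ω ≤ i} = ℙ {ω | Y 0 ω ≤ i} := fun j =>
      (hident j).measure_mem_eq (measurableSet_Iic (a := i))
    simp [heq]
  -- the real-valued quantities
  set P : ℕ → ℝ := fun i => (ℙ {ω | i + 1 ≤ Y 0 ω}).toReal with hP_def
  set Q : ℕ → ℝ := fun i => (ℙ {ω | Y 0 ω ≤ i}).toReal with hQ_def
  have hQP : ∀ i, Q i = 1 - P i := by
    intro i
    have hset : {ω | Y 0 ω ≤ i} = {ω | i + 1 ≤ Y 0 ω}ᶜ := by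
      ext ω; simp only [Set.mem_setOf_eq, Set.mem_compl_iff, not_le]; omega
    have hmeas' : MeasurableSet {ω | i + 1 ≤ Y 0 ω} := (hmeas 0) measurableSet_Ici
    have hcompl := prob_compl_eq_one_sub (μ := (ℙ : Measure Ω)) hmeas'
    show (ℙ {ω | Y 0 ω ≤ i}).toReal = 1 - (ℙ {ω | i + 1 ≤ Y 0 ω}).toReal
    rw [hset, hcompl, ENNReal.toReal_sub_of_le prob_le_one (by simp)]
    simp
  -- tail lower bound for P
  have hPl : ∀ i : ℕ, max N 1 ≤ i → c * (i : ℝ) ^ (-β) ≤ P i := by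
    intro i hi
    have hi1 : 1 ≤ i := le_trans (le_max_right _ _) hi
    have hiN : N ≤ i + 1 := le_trans (le_trans (le_max_left _ _) hi) (Nat.le_succ i)
    have h1 := hN (i + 1) hiN
    have h2 : c * (i : ℝ) ^ (-β) ≤ ((i + 1 : ℕ) : ℝ) ^ (-(1 - α) - ε) := by
      have hip : (0 : ℝ) < (i : ℝ) := by exact_mod_cast hi1
      have hi1' : (1 : ℝ) ≤ (i : ℝ) := by exact_mod_cast hi1
      have h2i : ((i + 1 : ℕ) : ℝ) ≤ 2 * (i : ℝ) := by push_cast; linarith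
      have key : (2 * (i : ℝ)) ^ (-β) ≤ ((i + 1 : ℕ) : ℝ) ^ (-β) :=
        Real.rpow_le_rpow_of_nonpos (by positivity) h2i (by linarith)
      have hmul : (2 * (i : ℝ)) ^ (-β) = c * (i : ℝ) ^ (-β) := by
        rw [Real.mul_rpow (by norm_num) hip.le]
      have : -(1 - α) - ε = -β := by simp [hβ_def]; ring
      rw [this]
      rw [← hmul]; exact key
    exact le_trans h2 (by exact_mod_cast h1)
  -- constants
  set r : ℕ := ⌈(s + 2) / ε⌉₊ with hr_def
  have hr : (s + 2) / ε ≤ (r : ℝ) := Nat.le_ceil _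
  have hrε : s + 2 ≤ ε * r := by
    rw [mul_comm]
    exact (div_le_iff₀ hε).mp hr
  set K : ℝ := ((Nat.factorial r) : ℝ) / c ^ r with hK_def
  have hK0 : 0 < K := by positivity
  -- the pointwise superpolynomial bound
  have hbound : ∀ i : ℕ, max N 1 ≤ i → (ℙ (A i)).toReal ≤ K * (i : ℝ) ^ (-(s + 2)) := by
    intro i hi
    have hi1 : 1 ≤ i := le_trans (le_max_right _ _) hi
    have hip : (0 : ℝ) < (i : ℝ) := by exact_mod_cast hi1
    have hi1' : (1 : ℝ) ≤ (i : ℝ) := by exact_mod_cast hi1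
    have hP01 : 0 ≤ P i := ENNReal.toReal_nonneg
    have hQ0 : 0 ≤ Q i := ENNReal.toReal_nonneg
    -- step A : toReal of the measure bound
    have hA1 : (ℙ (A i)).toReal ≤ Q i ^ (k i) := by
      have hne : (ℙ {ω | Y 0 ω ≤ i}) ^ (k i) ≠ ⊤ := ENNReal.pow_ne_top (measure_ne_top _ _)
      have := ENNReal.toReal_mono hne (hAmeas i)
      rwa [ENNReal.toReal_pow] at this
    -- step B : Q^k ≤ exp(-k P)
    have hA2 : Q i ^ (k i) ≤ Real.exp (-((k i : ℝ) * P i)) := by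
      have h1 : Q i ≤ Real.exp (-(P i)) := by
        rw [hQP i]
        linarith [Real.add_one_le_exp (-(P i))]
      calc Q i ^ (k i) ≤ Real.exp (-(P i)) ^ (k i) := pow_le_pow_left₀ hQ0 h1 _
      _ = Real.exp (-((k i : ℝ) * P i)) := by
          rw [← Real.exp_nat_mul]; ring_nf
    -- step C : k P ≥ c i^ε
    have hA3 : c * (i : ℝ) ^ ε ≤ (k i : ℝ) * P i := by
      have h1 : (i : ℝ) ^ ν ≤ (k i : ℝ) := Nat.le_ceil _
      have h2 : c * (i : ℝ) ^ (-β) ≤ P i := hPl i hi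
      have h3 : (i : ℝ) ^ ν * (c * (i : ℝ) ^ (-β)) ≤ (k i : ℝ) * P i :=
        mul_le_mul h1 h2 (by positivity) (le_trans (by positivity) h1)
      calc c * (i : ℝ) ^ ε = (i : ℝ) ^ ν * (c * (i : ℝ) ^ (-β)) := by
            rw [← hνβ, Real.rpow_sub hip, Real.rpow_neg hip.le, div_eq_mul_inv]
            ring
      _ ≤ (k i : ℝ) * P i := h3
    -- step D : exp(-c i^ε) ≤ K i^{-(s+2)}
    have hA4 : Real.exp (-(c * (i : ℝ) ^ ε)) ≤ K * (i : ℝ) ^ (-(s + 2)) := by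
      set y : ℝ := c * (i : ℝ) ^ ε with hy_def
      have hy : 0 < y := by positivity
      have hfac : y ^ r / ((Nat.factorial r) : ℝ) ≤ Real.exp y := Real.pow_div_factorial_le_exp (x := y) hy.le r
      have hexp : Real.exp (-y) ≤ ((Nat.factorial r) : ℝ) / y ^ r := by
        have h0 : (0:ℝ) < y ^ r / ((Nat.factorial r) : ℝ) := by positivity
        calc Real.exp (-y) = (Real.exp y)⁻¹ := Real.exp_neg y
        _ ≤ (y ^ r / ((Nat.factorial r) : ℝ))⁻¹ := by
            apply inv_anti₀ h0 hfac
        _ = ((Nat.factorial r) : ℝ) / y ^ r := inv_div _ _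
      have hyr : y ^ r = c ^ r * (i : ℝ) ^ (ε * r) := by
        rw [hy_def, mul_pow, ← Real.rpow_natCast ((i:ℝ) ^ ε) r, ← Real.rpow_mul hip.le]
      have h5 : ((Nat.factorial r) : ℝ) / y ^ r = K * (i : ℝ) ^ (-(ε * r)) := by
        rw [hyr, hK_def, Real.rpow_neg hip.le]
        field_simp
      have h6 : (i : ℝ) ^ (-(ε * r)) ≤ (i : ℝ) ^ (-(s + 2)) :=
        Real.rpow_le_rpow_of_exponent_le hi1' (by linarith)
      calc Real.exp (-y) ≤ ((Nat.factorial r) : ℝ) / y ^ r := hexp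
      _ = K * (i : ℝ) ^ (-(ε * r)) := h5
      _ ≤ K * (i : ℝ) ^ (-(s + 2)) := by
          exact mul_le_mul_of_nonneg_left h6 hK0.le
    calc (ℙ (A i)).toReal ≤ Q i ^ (k i) := hA1
    _ ≤ Real.exp (-((k i : ℝ) * P i)) := hA2
    _ ≤ Real.exp (-(c * (i : ℝ) ^ ε)) := by
        apply Real.exp_le_exp.mpr; linarith
    _ ≤ K * (i : ℝ) ^ (-(s + 2)) := hA4
  -- summability facts
  have hsum2 : Summable (fun j : ℕ => ((j : ℝ) + 1) ^ (-(2:ℝ))) := by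
    have h := (Real.summable_nat_rpow (p := (-(2:ℝ)))).mpr (by norm_num)
    have := (summable_nat_add_iff 1).mpr h
    refine this.congr fun j => ?_
    push_cast; ring_nf
  set L : ℝ := ∑' j : ℕ, ((j : ℝ) + 1) ^ (-(2:ℝ)) with hL_def
  have hL0 : 0 ≤ L := tsum_nonneg fun j => Real.rpow_nonneg (by positivity) _
  set N₁ : ℕ := max N 1 with hN₁_def
  refine ⟨K * L + (N₁ : ℝ) ^ (s : ℝ), ?_⟩
  intro n hn
  have hn0 : (0 : ℝ) < (n : ℝ) := by exact_mod_cast hn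
  have hns : 0 < (n : ℝ) ^ (-s) := Real.rpow_pos_of_pos hn0 _
  by_cases hcase : N₁ ≤ n
  · -- main case
    have hnn : ∀ j : ℕ, N₁ ≤ j + n := fun j => le_trans hcase (Nat.le_add_left n j)
    -- summables
    have hsumb : Summable (fun j : ℕ => K * (((j + n : ℕ) : ℝ)) ^ (-(s + 2))) := by
      apply Summable.mul_left
      have h := (Real.summable_nat_rpow (p := (-(s+2)))).mpr (by linarith)
      exact (summable_nat_add_iff n).mpr h
    have hterm : ∀ j : ℕ, K * (((j + n : ℕ) : ℝ)) ^ (-(s + 2)) ≤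
        K * (n : ℝ) ^ (-s) * ((j : ℝ) + 1) ^ (-(2:ℝ)) := by
      intro j
      have hjn : (0 : ℝ) < ((j + n : ℕ) : ℝ) := by
        have : 1 ≤ j + n := le_trans hn (Nat.le_add_left n j)
        exact_mod_cast this
      have h1 : (((j + n : ℕ) : ℝ)) ^ (-(s + 2)) =
          (((j + n : ℕ) : ℝ)) ^ (-s) * (((j + n : ℕ) : ℝ)) ^ (-(2:ℝ)) := by
        rw [← Real.rpow_add hjn]; ring_nf
      have h2 : (((j + n : ℕ) : ℝ)) ^ (-s) ≤ (n : ℝ) ^ (-s) := by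
        apply Real.rpow_le_rpow_of_nonpos hn0 _ (by linarith)
        push_cast; linarith [Nat.cast_nonneg (α := ℝ) j]
      have h3 : (((j + n : ℕ) : ℝ)) ^ (-(2:ℝ)) ≤ ((j : ℝ) + 1) ^ (-(2:ℝ)) := by
        apply Real.rpow_le_rpow_of_nonpos (by positivity) _ (by norm_num)
        push_cast
        have : (1 : ℝ) ≤ (n : ℝ) := by exact_mod_cast hn
        linarith
      calc K * (((j + n : ℕ) : ℝ)) ^ (-(s + 2))
          = K * ((((j + n : ℕ) : ℝ)) ^ (-s) * (((j + n : ℕ) : ℝ)) ^ (-(2:ℝ))) := by rw [h1]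
      _ ≤ K * ((n : ℝ) ^ (-s) * ((j : ℝ) + 1) ^ (-(2:ℝ))) := by
          apply mul_le_mul_of_nonneg_left _ hK0.le
          exact mul_le_mul h2 h3 (by positivity) (by positivity)
      _ = K * (n : ℝ) ^ (-s) * ((j : ℝ) + 1) ^ (-(2:ℝ)) := by ring
    -- the ENNReal chain
    have hchain : ℙ {ω | ∃ i : ℕ, n ≤ i ∧ (i : ℝ) ^ ν ≤ (M i ω : ℝ)} ≤
        ENNReal.ofReal (∑' j : ℕ, K * (((j + n : ℕ) : ℝ)) ^ (-(s + 2))) := by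
      calc ℙ {ω | ∃ i : ℕ, n ≤ i ∧ (i : ℝ) ^ ν ≤ (M i ω : ℝ)}
          ≤ ℙ (⋃ j : ℕ, A (j + n)) := measure_mono (hsub n)
      _ ≤ ∑' j : ℕ, ℙ (A (j + n)) := measure_iUnion_le _
      _ ≤ ∑' j : ℕ, ENNReal.ofReal (K * (((j + n : ℕ) : ℝ)) ^ (-(s + 2))) := by
          apply ENNReal.tsum_le_tsum
          intro j
          have hb := hbound (j + n) (hnn j)
          calc ℙ (A (j + n)) = ENNReal.ofReal ((ℙ (A (j + n))).toReal) := by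
                rw [ENNReal.ofReal_toReal (measure_ne_top _ _)]
          _ ≤ ENNReal.ofReal (K * (((j + n : ℕ) : ℝ)) ^ (-(s + 2))) :=
                ENNReal.ofReal_le_ofReal hb
      _ = ENNReal.ofReal (∑' j : ℕ, K * (((j + n : ℕ) : ℝ)) ^ (-(s + 2))) := by
          rw [ENNReal.ofReal_tsum_of_nonneg (fun j => by positivity) hsumb]
    have htsum : (∑' j : ℕ, K * (((j + n : ℕ) : ℝ)) ^ (-(s + 2))) ≤ K * L * (n : ℝ) ^ (-s) := by
      have hsumc : Summable (fun j : ℕ => K * (n : ℝ) ^ (-s) * ((j : ℝ) + 1) ^ (-(2:ℝ))) :=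
        hsum2.mul_left _
      calc (∑' j : ℕ, K * (((j + n : ℕ) : ℝ)) ^ (-(s + 2)))
          ≤ ∑' j : ℕ, K * (n : ℝ) ^ (-s) * ((j : ℝ) + 1) ^ (-(2:ℝ)) :=
            Summable.tsum_le_tsum hterm hsumb hsumc
      _ = K * (n : ℝ) ^ (-s) * L := by rw [tsum_mul_left]
      _ = K * L * (n : ℝ) ^ (-s) := by ring
    have hfin : (ℙ {ω | ∃ i : ℕ, n ≤ i ∧ (i : ℝ) ^ ν ≤ (M i ω : ℝ)}).toReal ≤
        (∑' j : ℕ, K * (((j + n : ℕ) : ℝ)) ^ (-(s + 2))) :=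
      ENNReal.toReal_le_of_le_ofReal (tsum_nonneg fun j => by positivity) hchain
    have hnonneg : 0 ≤ (N₁ : ℝ) ^ (s : ℝ) * (n : ℝ) ^ (-s) := by positivity
    calc (ℙ {ω | ∃ i : ℕ, n ≤ i ∧ (i : ℝ) ^ ν ≤ (M i ω : ℝ)}).toReal
        ≤ K * L * (n : ℝ) ^ (-s) := le_trans hfin htsum
    _ ≤ (K * L + (N₁ : ℝ) ^ (s : ℝ)) * (n : ℝ) ^ (-s) := by
        apply mul_le_mul_of_nonneg_right _ hns.le
        have hx : (0:ℝ) ≤ (N₁ : ℝ) ^ (s : ℝ) := Real.rpow_nonneg (Nat.cast_nonneg _) _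
        linarith
  · -- trivial case: n < N₁
    have hcase2 : n < N₁ := not_le.mp hcase
    have h1 : (ℙ {ω | ∃ i : ℕ, n ≤ i ∧ (i : ℝ) ^ ν ≤ (M i ω : ℝ)}).toReal ≤ 1 := by
      rw [← ENNReal.toReal_one]
      exact ENNReal.toReal_mono ENNReal.one_ne_top prob_le_one
    have h2 : (1 : ℝ) ≤ (N₁ : ℝ) ^ (s : ℝ) * (n : ℝ) ^ (-s) := by
      have hN₁0 : (0 : ℝ) < (N₁ : ℝ) := by
        have : 1 ≤ N₁ := le_max_right N 1
        exact_mod_cast this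
      have hle : (n : ℝ) ≤ (N₁ : ℝ) := by exact_mod_cast hcase2.le
      have h3 : (N₁ : ℝ) ^ (-s) ≤ (n : ℝ) ^ (-s) :=
        Real.rpow_le_rpow_of_nonpos hn0 hle (by linarith)
      have h4 : (N₁ : ℝ) ^ (s : ℝ) * (N₁ : ℝ) ^ (-s) = 1 := by
        rw [← Real.rpow_add hN₁0]; simp
      calc (1 : ℝ) = (N₁ : ℝ) ^ (s : ℝ) * (N₁ : ℝ) ^ (-s) := h4.symm
      _ ≤ (N₁ : ℝ) ^ (s : ℝ) * (n : ℝ) ^ (-s) := by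
          apply mul_le_mul_of_nonneg_left h3 (by positivity)
    have hKL : 0 ≤ K * L * (n : ℝ) ^ (-s) := by positivity
    calc (ℙ {ω | ∃ i : ℕ, n ≤ i ∧ (i : ℝ) ^ ν ≤ (M i ω : ℝ)}).toReal ≤ 1 := h1
    _ ≤ (N₁ : ℝ) ^ (s : ℝ) * (n : ℝ) ^ (-s) := h2
    _ ≤ (K * L + (N₁ : ℝ) ^ (s : ℝ)) * (n : ℝ) ^ (-s) := by
        have hKL2 : (0:ℝ) ≤ K * L := mul_nonneg hK0.le hL0
        have := mul_le_mul_of_nonneg_right (le_add_of_nonneg_left hKL2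
          (a := (N₁ : ℝ) ^ (s : ℝ))) hns.le
        linarith
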